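/- There is an absolute constant c > 0 such that for every binary search tree T on n nodes, there exists a sequence of at most c·n rotations starting from T such that: (i) every rotation in the sequence involves only nodes at depth at most 3 in the current tree; and (ii) every node of T becomes the root of the current tree at some point during the sequence. -/

import Mathlib

/-- A rooted tree (or the empty tree) on a subset `supp` of the vertex type `V`,
represented by parent pointers. -/
structure RTree (V : Type) where
  supp : Finset V
  parent : V → Option V
  parent_eq_none : ∀ v ∉ supp, parent v = none
  mem_of_parent : ∀ {v w : V}, parent v = some w → v ∈ supp ∧ w ∈ supp
  root_unique : ∀ v ∈ supp, ∀ w ∈ supp, parent v = none → parent w = none → v = w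
  reaches_root : ∀ v ∈ supp, ∃ r ∈ supp, parent r = none ∧
    Relation.ReflTransGen (fun a b => parent a = some b) v r

namespace RTree

variable {V : Type}

/-- `T.Anc a v` : `a` is an ancestor of `v` in `T` (possibly `a = v`). -/
def Anc (T : RTree V) (a v : V) : Prop :=
  Relation.ReflTransGen (fun x y => T.parent x = some y) v a

/-- `a` is a strict ancestor of `v`. -/
def StrictAnc (T : RTree V) (a v : V) : Prop := a ≠ v ∧ T.Anc a v

/-- The set of vertices of the subtree rooted at `a` (the descendants of `a`). -/
def descSet (T : RTree V) (a : V) : Set V := {v | T.Anc a v}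

/-- The depth of a node: the number of nodes on the path from the root to it
(the root has depth 1). -/
noncomputable def depth (T : RTree V) (v : V) : ℕ := Set.ncard {a | T.Anc a v}

def IsRoot (T : RTree V) (r : V) : Prop := r ∈ T.supp ∧ T.parent r = none

end RTree

/-- The restriction of a graph to a set of vertices (keeping the ambient vertex type). -/
def restrictG {V : Type} (G : SimpleGraph V) (U : Set V) : SimpleGraph V where
  Adj a b := G.Adj a b ∧ a ∈ U ∧ b ∈ U
  symm := ⟨fun a b ⟨h, ha, hb⟩ => ⟨h.symm, hb, ha⟩⟩
  loopless := ⟨fun a ⟨h, _, _⟩ => h.ne rfl⟩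

/-- `T` is a search tree on the induced subgraph `G[U]`: its nodes are the vertices of `U`,
the subtree of every node induces a connected subgraph, and every edge of `G[U]` joins
two comparable nodes of `T`. -/
def IsSTGOn {V : Type} (G : SimpleGraph V) (U : Finset V) (T : RTree V) : Prop :=
  T.supp = U ∧
  (∀ v ∈ U, ((restrictG G ↑U).induce (T.descSet v)).Connected) ∧
  (∀ u v : V, u ∈ U → v ∈ U → G.Adj u v → T.Anc u v ∨ T.Anc v u)

/-- `T` is a search tree on the graph `G`. -/
def IsSTG {V : Type} [Fintype V] (G : SimpleGraph V) (T : RTree V) : Prop :=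
  IsSTGOn G Finset.univ T

/-- `T'` is obtained from `T` by rotating the edge `(p, c)` of `T`, where `p` is
the parent of `c`: `c` replaces `p` (becoming a child of `p`'s former parent, or the
root if `p` was the root), `p` becomes a child of `c`, `p` keeps its other children,
and each child `x` of `c` whose subtree contains a vertex of `G` adjacent to `p`
becomes a child of `p` (the other children of `c` stay children of `c`). -/
def IsRotationAt {V : Type} (G : SimpleGraph V) (T T' : RTree V) (p c : V) : Prop :=
  T.parent c = some p ∧
  T'.supp = T.supp ∧
  T'.parent c = T.parent p ∧
  T'.parent p = some c ∧
  (∀ x : V, x ≠ p → T.parent x = some c →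
    ((∃ u ∈ T.descSet x, G.Adj u p) → T'.parent x = some p) ∧
    (¬(∃ u ∈ T.descSet x, G.Adj u p) → T'.parent x = some c)) ∧
  (∀ x : V, x ≠ c → x ≠ p → T.parent x ≠ some c → T'.parent x = T.parent x)

/-- `T'` is obtained from `T` by a single rotation. -/
def IsRotation {V : Type} (G : SimpleGraph V) (T T' : RTree V) : Prop :=
  ∃ p c, IsRotationAt G T T' p c

/-- `T2` can be obtained from `T1` by exactly `k` rotations. -/
def ReachesIn {V : Type} (G : SimpleGraph V) : ℕ → RTree V → RTree V → Prop
  | 0, T1, T2 => T1 = T2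
  | k+1, T1, T2 => ∃ T', IsRotation G T1 T' ∧ ReachesIn G k T' T2

/-- Vertex type of the caterpillar `C(m_1, …, m_n)`: spine vertices `inl i` and
leg vertices `inr ⟨i, j⟩`. -/
abbrev CatV (n : ℕ) (m : Fin n → ℕ) : Type := Fin n ⊕ (Σ i : Fin n, Fin (m i))

/-- The caterpillar tree `C(m_1, …, m_n)`: the spine `s_1 - s_2 - ⋯ - s_n` is a path,
and leg `ℓ_{i,j}` is adjacent to `s_i`. -/
def caterpillar (n : ℕ) (m : Fin n → ℕ) : SimpleGraph (CatV n m) where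
  Adj x y :=
    match x, y with
    | Sum.inl i, Sum.inl j => i.val + 1 = j.val ∨ j.val + 1 = i.val
    | Sum.inl i, Sum.inr l => l.1 = i
    | Sum.inr l, Sum.inl i => l.1 = i
    | Sum.inr _, Sum.inr _ => False
  symm := ⟨by rintro (i | l) (j | l') h <;> simp_all <;> tauto⟩
  loopless := ⟨by rintro (i | l) h <;> simp_all⟩

/-- The (base 2) Shannon entropy `H(m_1, …, m_n) = ∑_{i : m_i > 0} (m_i/m) log (m/m_i)`. -/
noncomputable def shannonH {n : ℕ} (m : Fin n → ℕ) : ℝ :=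
  ∑ i, if 0 < m i then
    ((m i : ℝ) / (∑ j, (m j : ℝ))) * Real.logb 2 ((∑ j, (m j : ℝ)) / (m i : ℝ))
  else 0

/-- The parent function of the search tree `A(S, π)` on the caterpillar: the legs form a
path at the top of the tree, ordered bottom-to-top according to `π`, and the spine nodes
hang below, arranged according to the BST `S`. -/
def AParent {n : ℕ} {m : Fin n → ℕ} (S : RTree (Fin n))
    (π : Fin (∑ i, m i) ≃ (Σ i : Fin n, Fin (m i))) :
    CatV n m → Option (CatV n m) :=
  fun x => match x with
  | Sum.inl i =>
      match S.parent i with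
      | some j => some (Sum.inl j)
      | none => if h : 0 < ∑ i, m i then some (Sum.inr (π ⟨0, h⟩)) else none
  | Sum.inr l =>
      if h : (π.symm l).val + 1 < ∑ i, m i then
        some (Sum.inr (π ⟨(π.symm l).val + 1, h⟩))
      else none

/-- `T = A(S, π)`. -/
def IsA {n : ℕ} {m : Fin n → ℕ} (S : RTree (Fin n))
    (π : Fin (∑ i, m i) ≃ (Σ i : Fin n, Fin (m i))) (T : RTree (CatV n m)) : Prop :=
  T.supp = Finset.univ ∧ T.parent = AParent S π

/-- The parent function of the search tree `B(S)` on the caterpillar: every leg `ℓ_{i,j}`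
is a (childless) child of `s_i`, and the spine nodes are arranged according to `S`. -/
def BParent {n : ℕ} {m : Fin n → ℕ} (S : RTree (Fin n)) :
    CatV n m → Option (CatV n m) :=
  fun x => match x with
  | Sum.inl i => (S.parent i).map Sum.inl
  | Sum.inr l => some (Sum.inl l.1)

/-- `T = B(S)`. -/
def IsB {n : ℕ} {m : Fin n → ℕ} (S : RTree (Fin n)) (T : RTree (CatV n m)) : Prop :=
  T.supp = Finset.univ ∧ T.parent = BParent S

/-- `σ(π)`: the sequence of spine indices obtained from the leg ordering `π` by replacing
each leg `ℓ_{i,j}` with `i`. -/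
def sigmaOf {n : ℕ} {m : Fin n → ℕ}
    (π : Fin (∑ i, m i) ≃ (Σ i : Fin n, Fin (m i))) : List (Fin n) :=
  List.ofFn (fun j => (π j).1)

/-- Every leg node of `T` is bound, i.e. no leg node has a child. -/
def noFreeLegs {n : ℕ} {m : Fin n → ℕ} (T : RTree (CatV n m)) : Prop :=
  ∀ (x : CatV n m) (l : Σ i : Fin n, Fin (m i)), T.parent x ≠ some (Sum.inr l)

open Classical in
/-- The number of adjacent pairs in a list satisfying `P`. -/
noncomputable def pairAlt {α : Type} (P : α → α → Prop) : List α → ℕ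
  | [] => 0
  | [_] => 0
  | a :: b :: t => (if P a b then 1 else 0) + pairAlt P (b :: t)

open Classical in
/-- Wilber's quantity `λ(S, u, σ)`: 0 if `u` has at most one child; otherwise the number
of adjacent pairs in the restriction of `σ` to the subtree of `u` that do not both lie in
the subtree of one child of `u` and are not both equal to `u`. -/
noncomputable def wilberLam {n : ℕ} (S : RTree (Fin n)) (u : Fin n) (σ : List (Fin n)) : ℕ :=
  if (∃ v w : Fin n, v ≠ w ∧ S.parent v = some u ∧ S.parent w = some u) then
    pairAlt (fun x y =>
      ¬((x = u ∧ y = u) ∨ ∃ ch, S.parent ch = some u ∧ S.Anc ch x ∧ S.Anc ch y))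
      (σ.filter (fun x => decide (S.Anc u x)))
  else 0

/-- `λ'(S, u, σ) = λ(S, u, σ)` plus the number of occurrences of `u` in `σ`. -/
noncomputable def wilberLam' {n : ℕ} (S : RTree (Fin n)) (u : Fin n)
    (σ : List (Fin n)) : ℕ :=
  wilberLam S u σ + σ.count u

/-- Wilber's first lower bound `Λ'(S, σ) = ∑_u λ'(S, u, σ)`. -/
noncomputable def wilberL' {n : ℕ} (S : RTree (Fin n)) (σ : List (Fin n)) : ℕ :=
  ∑ u : Fin n, wilberLam' S u σ

/-- `P` is the projection `T[U]` of `T` onto `U`: its nodes are the nodes of `T` in `U`,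
and the parent of `u` in `P` is the nearest strict ancestor of `u` in `T` that lies
in `U` (which is exactly the result of pruning the vertices outside `U` one by one). -/
def IsProjOn {V : Type} [DecidableEq V] (T : RTree V) (U : Finset V) (P : RTree V) : Prop :=
  P.supp = T.supp ∩ U ∧
  ∀ u w : V, P.parent u = some w ↔
    (u ∈ U ∧ w ∈ U ∧ T.StrictAnc w u ∧ ∀ z ∈ U, T.StrictAnc z u → T.Anc z w)

/-- `P` is obtained from `T` by pruning the vertex `v`. -/
def IsPruneOf {V : Type} [DecidableEq V] (T : RTree V) (v : V) (P : RTree V) : Prop :=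
  IsProjOn T (T.supp.erase v) P

/-- `PruneSeq T l P`: `P` is obtained from `T` by successively pruning the
vertices in the list `l`, in order. -/
def PruneSeq {V : Type} [DecidableEq V] : RTree V → List V → RTree V → Prop
  | T, [], P => P = T
  | T, v :: rest, P => ∃ P', IsPruneOf T v P' ∧ PruneSeq P' rest P

/-- The number of alternations (edges whose endpoints get different colors under `f`)
on the path from the root to `z`. -/
noncomputable def altAt {V K : Type} (f : V → K) (T : RTree V) (z : V) : ℕ :=
  Set.ncard {x | T.Anc x z ∧ ∃ y, T.parent x = some y ∧ f x ≠ f y}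

/-- The alternation number of `T` w.r.t. the coloring `f`: the maximum number of
alternations on a root-to-node path. -/
noncomputable def altNum {V K : Type} (f : V → K) (T : RTree V) : ℕ :=
  T.supp.sup (fun z => altAt f T z)

namespace BstAux

inductive Sh : Type where
  | nil : Sh
  | node (l r : Sh) : Sh

namespace Sh

def sz : Sh → ℕ
  | nil => 0
  | node l r => sz l + sz r + 1

/-- length of right spine -/
def rs : Sh → ℕ
  | nil => 0
  | node _ r => rs r + 1

lemma rs_le_sz : ∀ sh : Sh, rs sh ≤ sz sh
  | nil => le_refl _
  | node l r => by simp only [rs, sz]; have := rs_le_sz r; omega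

lemma sz_pos_ne_nil {sh : Sh} (h : 0 < sz sh) : sh ≠ nil := by
  cases sh with
  | nil => simp [sz] at h
  | node l r => exact fun h => by cases h

/-- root key of a shape whose leftmost key is `lo` -/
def rk : Sh → ℕ → ℕ
  | nil, lo => lo
  | node l _, lo => lo + sz l

/-- parent function: `lo` = leftmost key, `up` = parent of the root. -/
def par : Sh → ℕ → Option ℕ → ℕ → Option ℕ
  | nil, _, _, _ => none
  | node l r, lo, up, x =>
    if x = lo + sz l then up
    else if x < lo + sz l then par l lo (some (lo + sz l)) x
    else par r (lo + sz l + 1) (some (lo + sz l)) x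

lemma rk_mem : ∀ (sh : Sh) (lo : ℕ), sh ≠ nil → lo ≤ rk sh lo ∧ rk sh lo < lo + sz sh
  | nil, lo, h => absurd rfl h
  | node l r, lo, _ => by simp only [rk, sz]; omega

lemma par_rk (sh : Sh) (lo : ℕ) (up : Option ℕ) (h : sh ≠ nil) :
    par sh lo up (rk sh lo) = up := by
  cases sh with
  | nil => exact absurd rfl h
  | node l r => simp [par, rk]

lemma par_out : ∀ (sh : Sh) (lo : ℕ) (up : Option ℕ) (x : ℕ),
    (x < lo ∨ lo + sz sh ≤ x) → par sh lo up x = none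
  | nil, _, _, _, _ => rfl
  | node l r, lo, up, x, h => by
    simp only [sz] at h
    simp only [par]
    rw [if_neg (by omega)]
    by_cases hlt : x < lo + sz l
    · rw [if_pos hlt]; exact par_out l _ _ _ (by omega)
    · rw [if_neg hlt]; exact par_out r _ _ _ (by omega)

lemma par_some_of_ne_rk : ∀ (sh : Sh) (lo : ℕ) (up : Option ℕ) (x : ℕ),
    lo ≤ x → x < lo + sz sh → x ≠ rk sh lo →
    ∃ w, par sh lo up x = some w ∧ lo ≤ w ∧ w < lo + sz sh
  | nil, lo, _, x, h1, h2, _ => by simp only [sz] at h2; omega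
  | node l r, lo, up, x, h1, h2, h3 => by
    simp only [rk] at h3
    simp only [sz] at h2 ⊢
    simp only [par]
    rw [if_neg h3]
    by_cases hlt : x < lo + sz l
    · rw [if_pos hlt]
      by_cases hrl : x = rk l lo
      · subst hrl
        rw [par_rk l lo _ (sz_pos_ne_nil (by omega))]
        exact ⟨lo + sz l, rfl, by omega, by omega⟩
      · obtain ⟨w, hw, h5, h6⟩ := par_some_of_ne_rk l lo (some (lo + sz l)) x h1 hlt hrl
        exact ⟨w, hw, by omega, by omega⟩
    · rw [if_neg hlt]
      by_cases hrr : x = rk r (lo + sz l + 1)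
      · subst hrr
        rw [par_rk r _ _ (sz_pos_ne_nil (by omega))]
        exact ⟨lo + sz l, rfl, by omega, by omega⟩
      · obtain ⟨w, hw, h5, h6⟩ :=
          par_some_of_ne_rk r (lo + sz l + 1) (some (lo + sz l)) x (by omega) (by omega) hrr
        exact ⟨w, hw, by omega, by omega⟩

lemma par_none_iff (sh : Sh) (lo : ℕ) (up : Option ℕ) (x : ℕ)
    (h1 : lo ≤ x) (h2 : x < lo + sz sh) :
    par sh lo up x = none ↔ (x = rk sh lo ∧ up = none) := by
  constructor
  · intro h
    by_cases hx : x = rk sh lo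
    · subst hx
      rw [par_rk sh lo up (sz_pos_ne_nil (by omega))] at h
      exact ⟨rfl, h⟩
    · obtain ⟨w, hw, -⟩ := par_some_of_ne_rk sh lo up x h1 h2 hx
      rw [hw] at h; cases h
  · rintro ⟨hx, hup⟩
    subst hx; rw [par_rk sh lo up (sz_pos_ne_nil (by omega))]; exact hup

lemma par_some_cases : ∀ (sh : Sh) (lo : ℕ) (up : Option ℕ) (x w : ℕ),
    lo ≤ x → x < lo + sz sh → par sh lo up x = some w →
    (x = rk sh lo ∧ up = some w) ∨ (lo ≤ w ∧ w < lo + sz sh)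
  | nil, lo, _, x, w, h1, h2, _ => by simp only [sz] at h2; omega
  | node l r, lo, up, x, w, h1, h2, hp => by
    simp only [sz] at h2
    simp only [par] at hp
    by_cases hx : x = lo + sz l
    · rw [if_pos hx] at hp; exact Or.inl ⟨by simpa [rk] using hx, hp⟩
    · rw [if_neg hx] at hp
      by_cases hlt : x < lo + sz l
      · rw [if_pos hlt] at hp
        rcases par_some_cases l lo _ x w h1 hlt hp with ⟨-, h⟩ | ⟨h5, h6⟩
        · cases h; right; simp only [sz]; omega
        · right; simp only [sz]; omega
      · rw [if_neg hlt] at hp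
        rcases par_some_cases r (lo + sz l + 1) _ x w (by omega) (by omega) hp with ⟨-, h⟩ | ⟨h5, h6⟩
        · cases h; right; simp only [sz]; omega
        · right; simp only [sz]; omega

/-- `par` at a non-root key doesn't depend on `up`. -/
lemma par_up_irrel (sh : Sh) (lo : ℕ) (up up' : Option ℕ) (x : ℕ) (h : x ≠ rk sh lo) :
    par sh lo up x = par sh lo up' x := by
  cases sh with
  | nil => rfl
  | node l r =>
    simp only [rk] at h
    simp only [par]
    rw [if_neg h, if_neg h]

/-- if the parent lies outside the shape's range, the child is the root -/
lemma par_some_out (sh : Sh) (lo : ℕ) (up : Option ℕ) (x w : ℕ)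
    (h1 : lo ≤ x) (h2 : x < lo + sz sh) (hp : par sh lo up x = some w)
    (hout : w < lo ∨ lo + sz sh ≤ w) : x = rk sh lo ∧ up = some w := by
  rcases par_some_cases sh lo up x w h1 h2 hp with h | ⟨h5, h6⟩
  · exact h
  · omega

end Sh
end BstAux

namespace BstAux
namespace Sh

/-- the key range of the subtree rooted at key `x` -/
def rgOf : Sh → ℕ → ℕ → ℕ × ℕ
  | nil, _, x => (x, x)
  | node l r, lo, x =>
    if x = lo + sz l then (lo, lo + sz (node l r))
    else if x < lo + sz l then rgOf l lo x
    else rgOf r (lo + sz l + 1) x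

lemma rgOf_self : ∀ (sh : Sh) (lo x : ℕ), lo ≤ x → x < lo + sz sh →
    (rgOf sh lo x).1 ≤ x ∧ x < (rgOf sh lo x).2
  | nil, lo, x, h1, h2 => by simp only [sz] at h2; omega
  | node l r, lo, x, h1, h2 => by
    simp only [sz] at h2
    simp only [rgOf]
    by_cases hx : x = lo + sz l
    · rw [if_pos hx]; simp only [sz]; omega
    · rw [if_neg hx]
      by_cases hlt : x < lo + sz l
      · rw [if_pos hlt]; exact rgOf_self l lo x h1 hlt
      · rw [if_neg hlt]; exact rgOf_self r (lo + sz l + 1) x (by omega) (by omega)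

lemma rgOf_sub : ∀ (sh : Sh) (lo x : ℕ), lo ≤ x → x < lo + sz sh →
    lo ≤ (rgOf sh lo x).1 ∧ (rgOf sh lo x).2 ≤ lo + sz sh
  | nil, lo, x, h1, h2 => by simp only [sz] at h2; omega
  | node l r, lo, x, h1, h2 => by
    simp only [sz] at h2
    simp only [rgOf]
    by_cases hx : x = lo + sz l
    · rw [if_pos hx]; exact ⟨le_rfl, le_rfl⟩
    · rw [if_neg hx]
      by_cases hlt : x < lo + sz l
      · rw [if_pos hlt]
        have := rgOf_sub l lo x h1 hlt
        simp only [sz]; omega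
      · rw [if_neg hlt]
        have := rgOf_sub r (lo + sz l + 1) x (by omega) (by omega)
        simp only [sz]; omega

lemma rgOf_rk (l r : Sh) (lo : ℕ) :
    rgOf (node l r) lo (rk (node l r) lo) = (lo, lo + sz (node l r)) := by
  simp [rgOf, rk]

/-- a child lies in the parent's subtree range -/
lemma par_child_rg : ∀ (sh : Sh) (lo : ℕ) (up : Option ℕ) (x w : ℕ),
    (∀ u, up = some u → (u < lo ∨ lo + sz sh ≤ u)) →
    lo ≤ x → x < lo + sz sh → par sh lo up x = some w →
    lo ≤ w → w < lo + sz sh →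
    (rgOf sh lo w).1 ≤ x ∧ x < (rgOf sh lo w).2 ∧ x ≠ w
  | nil, lo, up, x, w, _, h1, h2, _, _, _ => by simp only [sz] at h2; omega
  | node l r, lo, up, x, w, hup, h1, h2, hp, hw1, hw2 => by
    simp only [sz] at h2 hw2
    simp only [par] at hp
    by_cases hx : x = lo + sz l
    · rw [if_pos hx] at hp
      rcases hup w hp with h | h
      · omega
      · simp only [sz] at h; omega
    · rw [if_neg hx] at hp
      by_cases hlt : x < lo + sz l
      · rw [if_pos hlt] at hp
        by_cases hwl : w < lo + sz l ∧ lo ≤ w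
        · have := par_child_rg l lo (some (lo + sz l)) x w
            (by rintro u ⟨rfl⟩; omega) h1 hlt hp hwl.2 hwl.1
          have hrg : rgOf (node l r) lo w = rgOf l lo w := by
            simp only [rgOf]
            rw [if_neg (by omega), if_pos hwl.1]
          rw [hrg]
          exact this
        · -- w outside l's range: then x = rk l lo and w = lo + sz l
          obtain ⟨hxr, hww⟩ := par_some_out l lo _ x w h1 hlt hp (by omega)
          cases hww
          have hrg : rgOf (node l r) lo (lo + sz l) = (lo, lo + sz (node l r)) := by
            simp [rgOf]
          rw [hrg]
          simp only [sz]
          omega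
      · rw [if_neg hlt] at hp
        by_cases hwl : lo + sz l + 1 ≤ w
        · have := par_child_rg r (lo + sz l + 1) (some (lo + sz l)) x w
            (by rintro u ⟨rfl⟩; omega) (by omega) (by omega) hp hwl (by omega)
          have hrg : rgOf (node l r) lo w = rgOf r (lo + sz l + 1) w := by
            simp only [rgOf]
            rw [if_neg (by omega), if_neg (by omega)]
          rw [hrg]
          exact this
        · obtain ⟨hxr, hww⟩ := par_some_out r (lo + sz l + 1) _ x w (by omega) (by omega) hp
            (by omega)
          cases hww
          have hrg : rgOf (node l r) lo (lo + sz l) = (lo, lo + sz (node l r)) := by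
            simp [rgOf]
          rw [hrg]
          simp only [sz]
          omega

/-- nested ranges -/
lemma rg_trans : ∀ (sh : Sh) (lo : ℕ) (x w : ℕ),
    lo ≤ x → x < lo + sz sh → lo ≤ w → w < lo + sz sh →
    (rgOf sh lo w).1 ≤ x → x < (rgOf sh lo w).2 →
    (rgOf sh lo w).1 ≤ (rgOf sh lo x).1 ∧ (rgOf sh lo x).2 ≤ (rgOf sh lo w).2
  | nil, lo, x, w, h1, h2, _, _, _, _ => by simp only [sz] at h2; omega
  | node l r, lo, x, w, h1, h2, hw1, hw2, hx1, hx2 => by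
    by_cases hweq : w = lo + sz l
    · have hrg : rgOf (node l r) lo w = (lo, lo + sz (node l r)) := by
        rw [hweq]; simp [rgOf]
      rw [hrg]
      exact rgOf_sub (node l r) lo x h1 h2
    · by_cases hwlt : w < lo + sz l
      · have hrgw : rgOf (node l r) lo w = rgOf l lo w := by
          simp only [rgOf]; rw [if_neg hweq, if_pos hwlt]
        rw [hrgw] at hx1 hx2 ⊢
        have hsubl := rgOf_sub l lo w hw1 hwlt
        have hxl : x < lo + sz l := by omega
        have hrgx : rgOf (node l r) lo x = rgOf l lo x := by
          simp only [rgOf]; rw [if_neg (by omega), if_pos hxl]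
        rw [hrgx]
        exact rg_trans l lo x w (by omega) hxl hw1 hwlt hx1 hx2
      · have hwgt : lo + sz l + 1 ≤ w := by omega
        have hrgw : rgOf (node l r) lo w = rgOf r (lo + sz l + 1) w := by
          simp only [rgOf]; rw [if_neg hweq, if_neg (by omega)]
        rw [hrgw] at hx1 hx2 ⊢
        have hw2' : w < lo + sz l + 1 + sz r := by simp only [sz] at hw2; omega
        have hsubr := rgOf_sub r (lo + sz l + 1) w hwgt hw2'
        have hxr : lo + sz l + 1 ≤ x := by omega
        have hrgx : rgOf (node l r) lo x = rgOf r (lo + sz l + 1) x := by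
          simp only [rgOf]; rw [if_neg (by omega), if_neg (by omega)]
        rw [hrgx]
        have hx2' : x < lo + sz l + 1 + sz r := by simp only [sz] at h2; omega
        exact rg_trans r (lo + sz l + 1) x w hxr hx2' hwgt hw2' hx1 hx2

/-- everything in a shape's range reaches the root key, for any step relation
containing the parent steps -/
lemma anc_rk : ∀ (sh : Sh) (lo : ℕ) (up : Option ℕ) (S : ℕ → ℕ → Prop)
    (_ : ∀ x w, lo ≤ x → x < lo + sz sh → par sh lo up x = some w → S x w)
    (x : ℕ), lo ≤ x → x < lo + sz sh →
    Relation.ReflTransGen S x (rk sh lo)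
  | nil, lo, up, S, hS, x, h1, h2 => by simp only [sz] at h2; omega
  | node l r, lo, up, S, hS, x, h1, h2 => by
    simp only [sz] at h2
    by_cases hx : x = lo + sz l
    · rw [hx]; exact Relation.ReflTransGen.refl
    · by_cases hlt : x < lo + sz l
      · have hl : l ≠ nil := sz_pos_ne_nil (by omega)
        have hstep : ∀ y w, lo ≤ y → y < lo + sz l → par l lo (some (lo + sz l)) y = some w →
            S y w := by
          intro y w hy1 hy2 hp
          apply hS y w hy1 (by simp only [sz]; omega)
          simp only [par]
          rw [if_neg (by omega), if_pos hy2]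
          exact hp
        have hrtg := anc_rk l lo (some (lo + sz l)) S hstep x h1 hlt
        have hlast : S (rk l lo) (lo + sz l) := by
          have := rk_mem l lo hl
          exact hstep (rk l lo) (lo + sz l) this.1 this.2 (par_rk l lo _ hl)
        exact Relation.ReflTransGen.tail hrtg hlast
      · have hr : r ≠ nil := sz_pos_ne_nil (by omega)
        have hstep : ∀ y w, lo + sz l + 1 ≤ y → y < lo + sz l + 1 + sz r →
            par r (lo + sz l + 1) (some (lo + sz l)) y = some w → S y w := by
          intro y w hy1 hy2 hp
          apply hS y w (by omega) (by simp only [sz]; omega)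
          simp only [par]
          rw [if_neg (by omega), if_neg (by omega)]
          exact hp
        have hrtg := anc_rk r (lo + sz l + 1) (some (lo + sz l)) S
          (fun y w hy1 hy2 => hstep y w hy1 hy2) x (by omega) (by omega)
        have hlast : S (rk r (lo + sz l + 1)) (lo + sz l) := by
          have := rk_mem r (lo + sz l + 1) hr
          exact hstep _ _ this.1 this.2 (par_rk r _ _ hr)
        exact Relation.ReflTransGen.tail hrtg hlast

end Sh
end BstAux

namespace BstAux
open Sh

/-- parent of the root region: `m-1` is the global root when `m ≥ 1` -/
def rho (m : ℕ) : Option ℕ := if m = 0 then none else some (m - 1)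

/-- full state parent function on ℕ: keys `< m` form the top spine, shape `R` on `[m, m+sz R)` -/
def stPar (m : ℕ) (R : Sh) (x : ℕ) : Option ℕ :=
  if x + 1 < m then some (x + 1)
  else if x + 1 = m then none
  else par R m (rho m) x

def rootN (m : ℕ) (R : Sh) : ℕ := if m = 0 then rk R 0 else m - 1

def stepOf (m : ℕ) (R : Sh) : ℕ → ℕ → Prop := fun a b => stPar m R a = some b

lemma stPar_spine {m x : ℕ} (R : Sh) (h : x + 1 < m) : stPar m R x = some (x + 1) := by
  simp [stPar, h]

lemma stPar_top {m x : ℕ} (R : Sh) (h : x + 1 = m) : stPar m R x = none := by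
  simp [stPar, h]

lemma stPar_ge {m x : ℕ} (R : Sh) (h : m ≤ x) : stPar m R x = par R m (rho m) x := by
  unfold stPar
  rw [if_neg (by omega), if_neg (by omega)]

lemma stPar_lt {m x y : ℕ} {R : Sh} (h : stPar m R x = some y) :
    x < m + sz R ∧ y < m + sz R := by
  unfold stPar at h
  by_cases h1 : x + 1 < m
  · rw [if_pos h1] at h
    cases h
    constructor <;> omega
  · rw [if_neg h1] at h
    by_cases h2 : x + 1 = m
    · rw [if_pos h2] at h; cases h
    · rw [if_neg h2] at h
      have hx : m ≤ x := by omega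
      have hxlt : x < m + sz R := by
        by_contra hc
        rw [par_out R m (rho m) x (by omega)] at h
        cases h
      refine ⟨hxlt, ?_⟩
      rcases par_some_cases R m (rho m) x y hx hxlt h with ⟨-, hup⟩ | ⟨h5, h6⟩
      · unfold rho at hup
        by_cases hm : m = 0
        · rw [if_pos hm] at hup; cases hup
        · rw [if_neg hm] at hup; cases hup; omega
      · omega

lemma stPar_none_iff {m x : ℕ} {R : Sh} (hx : x < m + sz R) :
    stPar m R x = none ↔ x = rootN m R := by
  unfold stPar rootN
  by_cases h1 : x + 1 < m
  · rw [if_pos h1]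
    simp only [reduceCtorEq, false_iff]
    intro hc
    rw [if_neg (by omega)] at hc
    omega
  · rw [if_neg h1]
    by_cases h2 : x + 1 = m
    · rw [if_pos h2, if_neg (by omega)]
      simp only [true_iff]
      omega
    · rw [if_neg h2]
      have hx1 : m ≤ x := by omega
      rw [par_none_iff R m (rho m) x hx1 hx]
      unfold rho
      by_cases hm : m = 0
      · subst hm; simp
      · rw [if_neg hm, if_neg hm]
        simp only [reduceCtorEq, and_false, false_iff]
        omega

lemma spine_reach : ∀ (d m : ℕ) (R : Sh) (x : ℕ), x + d + 1 = m →
    Relation.ReflTransGen (stepOf m R) x (m - 1)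
  | 0, m, R, x, h => by
    have : x = m - 1 := by omega
    rw [this]
  | d + 1, m, R, x, h => by
    have hstep : stepOf m R x (x + 1) := stPar_spine R (by omega)
    exact Relation.ReflTransGen.head hstep (spine_reach d m R (x + 1) (by omega))

lemma reach_rootN {m x : ℕ} {R : Sh} (hx : x < m + sz R) :
    Relation.ReflTransGen (stepOf m R) x (rootN m R) := by
  by_cases hxm : x < m
  · unfold rootN
    rw [if_neg (by omega)]
    exact spine_reach (m - 1 - x) m R x (by omega)
  · have hx1 : m ≤ x := by omega
    have hR : R ≠ nil := sz_pos_ne_nil (by omega)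
    have hrtg : Relation.ReflTransGen (stepOf m R) x (rk R m) := by
      apply anc_rk R m (rho m) (stepOf m R) ?_ x hx1 hx
      intro y w hy1 hy2 hp
      unfold stepOf
      rw [stPar_ge R hy1]
      exact hp
    by_cases hm : m = 0
    · subst hm
      unfold rootN
      simpa using hrtg
    · unfold rootN
      rw [if_neg hm]
      refine Relation.ReflTransGen.tail hrtg ?_
      unfold stepOf
      rw [stPar_ge R (rk_mem R m hR).1, par_rk R m (rho m) hR]
      unfold rho
      rw [if_neg hm]

lemma desc_rg {m u x : ℕ} {R : Sh} (h : Relation.ReflTransGen (stepOf m R) u x)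
    (hx1 : m ≤ x) (hx2 : x < m + sz R) :
    (rgOf R m x).1 ≤ u ∧ u < (rgOf R m x).2 := by
  induction h using Relation.ReflTransGen.head_induction_on with
  | refl => exact rgOf_self R m x hx1 hx2
  | head hstep _ ih =>
    rename_i a c _
    have hsubc := rgOf_sub R m x hx1 hx2
    have hc1 : m ≤ c := by omega
    have hc2 : c < m + sz R := by omega
    have ha2 : a < m + sz R := (stPar_lt hstep).1
    have ha1 : m ≤ a := by
      by_contra hc
      unfold stepOf stPar at hstep
      by_cases hsp : a + 1 < m
      · rw [if_pos hsp] at hstep; cases hstep; omega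
      · rw [if_neg hsp, if_pos (by omega)] at hstep; cases hstep
    have hpar : par R m (rho m) a = some c := by
      rw [← stPar_ge R ha1]; exact hstep
    have hchild := par_child_rg R m (rho m) a c ?_ ha1 ha2 hpar hc1 hc2
    · have htr := rg_trans R m c x hc1 hc2 hx1 hx2 ih.1 ih.2
      exact ⟨by omega, by omega⟩
    · intro v hv
      unfold rho at hv
      by_cases hm : m = 0
      · rw [if_pos hm] at hv; cases hv
      · rw [if_neg hm] at hv; cases hv; left; omega

/-! ### the RTree on `Fin n` -/

def parF (n m : ℕ) (R : Sh) (v : Fin n) : Option (Fin n) :=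
  (stPar m R v.val).bind (fun y => if h : y < n then some ⟨y, h⟩ else none)

lemma parF_eq_some {n m : ℕ} {R : Sh} (hn : m + sz R = n) {v w : Fin n} :
    parF n m R v = some w ↔ stPar m R v.val = some w.val := by
  unfold parF
  cases hst : stPar m R v.val with
  | none => simp
  | some y =>
    have hy : y < n := by have := (stPar_lt hst).2; omega
    simp only [Option.bind_some, dif_pos hy, Option.some.injEq]
    constructor
    · rintro rfl; rfl
    · intro h
      exact Fin.ext h

lemma parF_eq_none {n m : ℕ} {R : Sh} (hn : m + sz R = n) {v : Fin n} :
    parF n m R v = none ↔ stPar m R v.val = none := by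
  unfold parF
  cases hst : stPar m R v.val with
  | none => simp
  | some y =>
    have hy : y < n := by have := (stPar_lt hst).2; omega
    simp [dif_pos hy]

lemma liftRTG {n m : ℕ} {R : Sh} (hn : m + sz R = n) {y : ℕ} (hy : y < n) :
    ∀ (a : ℕ), Relation.ReflTransGen (stepOf m R) a y → ∀ (ha : a < n),
      Relation.ReflTransGen (fun a b : Fin n => parF n m R a = some b) ⟨a, ha⟩ ⟨y, hy⟩ := by
  intro a h
  induction h using Relation.ReflTransGen.head_induction_on with
  | refl => intro ha; exact Relation.ReflTransGen.refl
  | head hstep _ ih =>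
    rename_i p q hq
    intro ha
    have hqn : q < n := by have := (stPar_lt hstep).2; omega
    refine Relation.ReflTransGen.head ?_ (ih hqn)
    exact (parF_eq_some hn).mpr hstep

lemma projRTG {n m : ℕ} {R : Sh} (hn : m + sz R = n) {a b : Fin n}
    (h : Relation.ReflTransGen (fun a b : Fin n => parF n m R a = some b) a b) :
    Relation.ReflTransGen (stepOf m R) a.val b.val :=
  Relation.ReflTransGen.lift (p := stepOf m R) Fin.val (fun _ _ hr => (parF_eq_some hn).mp hr) _ _ h

def treeOf (n m : ℕ) (R : Sh) (hn : m + sz R = n) : RTree (Fin n) where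
  supp := Finset.univ
  parent := parF n m R
  parent_eq_none := fun v hv => absurd (Finset.mem_univ v) hv
  mem_of_parent := fun _ => ⟨Finset.mem_univ _, Finset.mem_univ _⟩
  root_unique := by
    intro v _ w _ hv hw
    have hv' := (stPar_none_iff (by omega : v.val < m + sz R)).mp ((parF_eq_none hn).mp hv)
    have hw' := (stPar_none_iff (by omega : w.val < m + sz R)).mp ((parF_eq_none hn).mp hw)
    exact Fin.ext (hv'.trans hw'.symm)
  reaches_root := by
    intro v _
    have hn1 : 1 ≤ n := v.pos
    have hrt : rootN m R < n := by
      unfold rootN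
      by_cases hm : m = 0
      · subst hm
        rw [if_pos rfl]
        have hR : R ≠ nil := sz_pos_ne_nil (by omega)
        have := rk_mem R 0 hR
        omega
      · rw [if_neg hm]; omega
    refine ⟨⟨rootN m R, hrt⟩, Finset.mem_univ _, ?_, ?_⟩
    · exact (parF_eq_none hn).mpr ((stPar_none_iff (by omega)).mpr rfl)
    · exact liftRTG hn hrt v.val (reach_rootN (by omega)) v.isLt

lemma treeOf_parent_some {n m : ℕ} {R : Sh} (hn : m + sz R = n) {v w : Fin n} :
    (treeOf n m R hn).parent v = some w ↔ stPar m R v.val = some w.val :=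
  parF_eq_some hn

lemma treeOf_anc {n m : ℕ} {R : Sh} (hn : m + sz R = n) {a v : Fin n} :
    (treeOf n m R hn).Anc a v ↔ Relation.ReflTransGen (stepOf m R) v.val a.val := by
  constructor
  · intro h
    exact projRTG hn h
  · intro h
    have := liftRTG hn a.isLt v.val h v.isLt
    unfold RTree.Anc
    exact this

lemma treeOf_isRoot {n m : ℕ} {R : Sh} (hn : m + sz R = n) {x : Fin n} :
    (treeOf n m R hn).IsRoot x ↔ x.val = rootN m R := by
  unfold RTree.IsRoot
  rw [show (treeOf n m R hn).supp = Finset.univ from rfl]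
  simp only [Finset.mem_univ, true_and]
  rw [show (treeOf n m R hn).parent = parF n m R from rfl]
  rw [parF_eq_none hn, stPar_none_iff (by omega : x.val < m + sz R)]

lemma rtree_ext {V : Type} (T T' : RTree V) (h1 : T.supp = T'.supp)
    (h2 : T.parent = T'.parent) : T = T' := by
  cases T; cases T'
  simp only at h1 h2
  subst h1; subst h2
  rfl

end BstAux
namespace BstAux
open Sh

lemma par_node (l r : Sh) (lo : ℕ) (up : Option ℕ) (x : ℕ) :
    par (node l r) lo up x =
      if x = lo + sz l then up
      else if x < lo + sz l then par l lo (some (lo + sz l)) x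
      else par r (lo + sz l + 1) (some (lo + sz l)) x := rfl

section StepA

variable (m : ℕ) (l₁ l₂ r : Sh)

-- abbreviations (we inline them in statements)
-- c = m + sz l₁ ;  p = m + sz l₁ + sz l₂ + 1

lemma regA_x {x : ℕ} (h1 : m ≤ x) (h2 : x < m + sz l₁) :
    stPar m (node (node l₁ l₂) r) x = par l₁ m (some (m + sz l₁)) x ∧
    stPar m (node l₁ (node l₂ r)) x = par l₁ m (some (m + sz l₁)) x := by
  constructor
  · rw [stPar_ge _ h1, par_node]
    rw [if_neg (by simp only [sz]; omega), if_pos (by simp only [sz]; omega), par_node]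
    rw [if_neg (by omega), if_pos (by omega)]
  · rw [stPar_ge _ h1, par_node]
    rw [if_neg (by omega), if_pos (by omega)]

lemma regA_y {x : ℕ} (h1 : m + sz l₁ + 1 ≤ x) (h2 : x < m + sz l₁ + 1 + sz l₂) :
    stPar m (node (node l₁ l₂) r) x = par l₂ (m + sz l₁ + 1) (some (m + sz l₁)) x ∧
    stPar m (node l₁ (node l₂ r)) x =
      par l₂ (m + sz l₁ + 1) (some (m + sz l₁ + sz l₂ + 1)) x := by
  constructor
  · rw [stPar_ge _ (by omega), par_node]
    rw [if_neg (by simp only [sz]; omega), if_pos (by simp only [sz]; omega), par_node]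
    rw [if_neg (by omega), if_neg (by omega)]
  · rw [stPar_ge _ (by omega), par_node]
    rw [if_neg (by omega), if_neg (by omega), par_node]
    rw [if_neg (by omega), if_pos (by omega)]
    have e : m + sz l₁ + 1 + sz l₂ = m + sz l₁ + sz l₂ + 1 := by omega
    rw [e]

lemma regA_z {x : ℕ} (h1 : m + sz l₁ + sz l₂ + 2 ≤ x) :
    stPar m (node (node l₁ l₂) r) x =
      par r (m + sz l₁ + sz l₂ + 2) (some (m + sz l₁ + sz l₂ + 1)) x ∧
    stPar m (node l₁ (node l₂ r)) x =
      par r (m + sz l₁ + sz l₂ + 2) (some (m + sz l₁ + sz l₂ + 1)) x := by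
  constructor
  · rw [stPar_ge _ (by omega), par_node]
    rw [if_neg (by simp only [sz]; omega), if_neg (by simp only [sz]; omega)]
    have e1 : m + sz (node l₁ l₂) + 1 = m + sz l₁ + sz l₂ + 2 := by simp only [sz]; omega
    have e2 : m + sz (node l₁ l₂) = m + sz l₁ + sz l₂ + 1 := by simp only [sz]; omega
    rw [e1, e2]
  · rw [stPar_ge _ (by omega), par_node]
    rw [if_neg (by omega), if_neg (by omega), par_node]
    rw [if_neg (by omega), if_neg (by omega)]
    have e1 : m + sz l₁ + 1 + sz l₂ + 1 = m + sz l₁ + sz l₂ + 2 := by omega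
    have e2 : m + sz l₁ + 1 + sz l₂ = m + sz l₁ + sz l₂ + 1 := by omega
    rw [e1, e2]

lemma regA_c :
    stPar m (node (node l₁ l₂) r) (m + sz l₁) = some (m + sz l₁ + sz l₂ + 1) ∧
    stPar m (node l₁ (node l₂ r)) (m + sz l₁) = rho m := by
  constructor
  · rw [stPar_ge _ (by omega), par_node]
    rw [if_neg (by simp only [sz]; omega), if_pos (by simp only [sz]; omega), par_node]
    rw [if_pos (by omega)]
    congr 1
    simp only [sz]; omega
  · rw [stPar_ge _ (by omega), par_node]
    rw [if_pos (by omega)]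

lemma regA_p :
    stPar m (node (node l₁ l₂) r) (m + sz l₁ + sz l₂ + 1) = rho m ∧
    stPar m (node l₁ (node l₂ r)) (m + sz l₁ + sz l₂ + 1) = some (m + sz l₁) := by
  constructor
  · rw [stPar_ge _ (by omega), par_node]
    rw [if_pos (by simp only [sz]; omega)]
  · rw [stPar_ge _ (by omega), par_node]
    rw [if_neg (by omega), if_neg (by omega), par_node]
    rw [if_pos (by omega)]

end StepA

end BstAux
namespace BstAux
open Sh

lemma depth_le_three_of {n : ℕ} (T : RTree (Fin n)) (q x y z : Fin n)
    (h : ∀ a, T.Anc a q → a = x ∨ a = y ∨ a = z) : T.depth q ≤ 3 := by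
  unfold RTree.depth
  have hsub : {a | T.Anc a q} ⊆ ({x, y, z} : Set (Fin n)) := by
    intro a ha
    rcases h a ha with h | h | h <;> simp [h]
  calc Set.ncard {a | T.Anc a q} ≤ ({x, y, z} : Set (Fin n)).ncard :=
        Set.ncard_le_ncard hsub (Set.toFinite _)
    _ ≤ ({y, z} : Set (Fin n)).ncard + 1 := Set.ncard_insert_le _ _
    _ ≤ (({z} : Set (Fin n)).ncard + 1) + 1 := by
        have := Set.ncard_insert_le y ({z} : Set (Fin n)); omega
    _ ≤ 3 := by rw [Set.ncard_singleton]

theorem stepA (n m : ℕ) (l₁ l₂ r : Sh)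
    (hn : m + sz (node (node l₁ l₂) r) = n)
    (hn' : m + sz (node l₁ (node l₂ r)) = n)
    (hp : m + sz l₁ + sz l₂ + 1 < n) (hc : m + sz l₁ < n) :
    IsRotationAt (SimpleGraph.pathGraph n)
      (treeOf n m (node (node l₁ l₂) r) hn) (treeOf n m (node l₁ (node l₂ r)) hn')
      ⟨m + sz l₁ + sz l₂ + 1, hp⟩ ⟨m + sz l₁, hc⟩ ∧
    (treeOf n m (node (node l₁ l₂) r) hn).depth ⟨m + sz l₁ + sz l₂ + 1, hp⟩ ≤ 3 ∧
    (treeOf n m (node (node l₁ l₂) r) hn).depth ⟨m + sz l₁, hc⟩ ≤ 3 := by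
  have hszR : sz (node (node l₁ l₂) r) = sz l₁ + sz l₂ + sz r + 2 := by
    simp only [sz]; omega
  have hnn : n = m + sz l₁ + sz l₂ + sz r + 2 := by omega
  -- ancestor chain analysis for p and c in the old tree
  have hanc_p : ∀ a : Fin n, (treeOf n m (node (node l₁ l₂) r) hn).Anc a
      ⟨m + sz l₁ + sz l₂ + 1, hp⟩ →
      a.val = m + sz l₁ + sz l₂ + 1 ∨ a.val = m - 1 := by
    intro a ha
    rw [treeOf_anc] at ha
    have ha' : Relation.ReflTransGen (stepOf m (node (node l₁ l₂) r))
        (m + sz l₁ + sz l₂ + 1) a.val := ha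
    rcases Relation.ReflTransGen.cases_head ha' with h | ⟨w, hw, hrest⟩
    · left; omega
    · right
      rw [show stepOf m (node (node l₁ l₂) r) (m + sz l₁ + sz l₂ + 1) w =
        (stPar m (node (node l₁ l₂) r) (m + sz l₁ + sz l₂ + 1) = some w) from rfl,
        (regA_p m l₁ l₂ r).1] at hw
      unfold rho at hw
      by_cases hm : m = 0
      · rw [if_pos hm] at hw; cases hw
      · rw [if_neg hm] at hw
        obtain rfl := Option.some.inj hw
        rcases Relation.ReflTransGen.cases_head hrest with h | ⟨w', hw', _⟩
        · omega
        · rw [show stepOf m (node (node l₁ l₂) r) (m-1) w' =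
            (stPar m (node (node l₁ l₂) r) (m-1) = some w') from rfl,
            stPar_top _ (by omega)] at hw'
          cases hw'
  have hanc_c : ∀ a : Fin n, (treeOf n m (node (node l₁ l₂) r) hn).Anc a ⟨m + sz l₁, hc⟩ →
      a.val = m + sz l₁ ∨ a.val = m + sz l₁ + sz l₂ + 1 ∨ a.val = m - 1 := by
    intro a ha
    rw [treeOf_anc] at ha
    have ha' : Relation.ReflTransGen (stepOf m (node (node l₁ l₂) r))
        (m + sz l₁) a.val := ha
    rcases Relation.ReflTransGen.cases_head ha' with h | ⟨w, hw, hrest⟩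
    · left; omega
    · right
      rw [show stepOf m (node (node l₁ l₂) r) (m + sz l₁) w =
        (stPar m (node (node l₁ l₂) r) (m + sz l₁) = some w) from rfl,
        (regA_c m l₁ l₂ r).1] at hw
      obtain rfl := Option.some.inj hw
      exact hanc_p a (by rw [treeOf_anc]; exact hrest)
  refine ⟨⟨?_, rfl, ?_, ?_, ?_, ?_⟩, ?_, ?_⟩
  · -- T.parent c = some p
    exact (treeOf_parent_some hn).mpr (regA_c m l₁ l₂ r).1
  · -- T'.parent c = T.parent p
    show parF n m (node l₁ (node l₂ r)) ⟨m + sz l₁, hc⟩ =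
      parF n m (node (node l₁ l₂) r) ⟨m + sz l₁ + sz l₂ + 1, hp⟩
    unfold parF
    rw [show ((⟨m + sz l₁, hc⟩ : Fin n) : ℕ) = m + sz l₁ from rfl,
      show ((⟨m + sz l₁ + sz l₂ + 1, hp⟩ : Fin n) : ℕ) = m + sz l₁ + sz l₂ + 1 from rfl,
      (regA_c m l₁ l₂ r).2, (regA_p m l₁ l₂ r).1]
  · -- T'.parent p = some c
    exact (treeOf_parent_some hn').mpr (regA_p m l₁ l₂ r).2
  · -- children of c
    intro x hxp hpar
    rw [treeOf_parent_some hn] at hpar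
    replace hpar : stPar m (node (node l₁ l₂) r) x.val = some (m + sz l₁) := hpar
    have hxp2 : x.val ≠ m + sz l₁ + sz l₂ + 1 := fun h => hxp (Fin.ext h)
    have hxval : x.val < n := x.isLt
    -- classify x
    have hclass : (sz l₁ ≠ 0 ∧ x.val = rk l₁ m) ∨ (sz l₂ ≠ 0 ∧ x.val = rk l₂ (m + sz l₁ + 1)) := by
      by_cases h1 : x.val + 1 < m
      · rw [stPar_spine _ h1] at hpar
        have := Option.some.inj hpar; omega
      · by_cases h2 : x.val + 1 = m
        · rw [stPar_top _ h2] at hpar; cases hpar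
        · have hxm : m ≤ x.val := by omega
          by_cases hxc : x.val = m + sz l₁
          · rw [hxc, (regA_c m l₁ l₂ r).1] at hpar
            have := Option.some.inj hpar; omega
          · by_cases hxlt : x.val < m + sz l₁
            · left
              rw [(regA_x m l₁ l₂ r hxm hxlt).1] at hpar
              refine ⟨by omega, (par_some_out l₁ m _ _ _ hxm hxlt hpar (by omega)).1⟩
            · by_cases hxlt2 : x.val < m + sz l₁ + sz l₂ + 1
              · right
                rw [(regA_y m l₁ l₂ r (by omega) (by omega)).1] at hpar
                refine ⟨by omega, (par_some_out l₂ (m + sz l₁ + 1) _ _ _ (by omega) (by omega)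
                  hpar (by omega)).1⟩
              · exfalso
                have hz : m + sz l₁ + sz l₂ + 2 ≤ x.val := by omega
                rw [(regA_z m l₁ l₂ r hz).1] at hpar
                have := par_some_out r (m + sz l₁ + sz l₂ + 2) _ _ _ (by omega) (by omega)
                  hpar (by omega)
                have := Option.some.inj this.2
                omega
    rcases hclass with ⟨hl1, hxv⟩ | ⟨hl2, hxv⟩
    · -- x is the root of l₁ : stays a child of c
      have hl1' : l₁ ≠ nil := fun h => hl1 (by rw [h]; rfl)
      have hrkb := rk_mem l₁ m hl1'
      constructor
      · -- no adjacent vertex: contradiction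
        rintro ⟨u, hu, hadj⟩
        exfalso
        rw [RTree.descSet, Set.mem_setOf_eq, treeOf_anc] at hu
        have hu' : Relation.ReflTransGen (stepOf m (node (node l₁ l₂) r)) u.val x.val := hu
        have hdesc := desc_rg hu' (by omega) (by omega : x.val < m + sz (node (node l₁ l₂) r))
        have hrg1 : rgOf (node (node l₁ l₂) r) m x.val = rgOf (node l₁ l₂) m x.val := by
          rw [show rgOf (node (node l₁ l₂) r) m x.val =
            if x.val = m + sz (node l₁ l₂) then (m, m + sz (node (node l₁ l₂) r))
            else if x.val < m + sz (node l₁ l₂) then rgOf (node l₁ l₂) m x.val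
            else rgOf r (m + sz (node l₁ l₂) + 1) x.val from rfl]
          rw [if_neg (by simp only [sz]; omega), if_pos (by simp only [sz]; omega)]
        have hrg2 : rgOf (node l₁ l₂) m x.val = rgOf l₁ m x.val := by
          rw [show rgOf (node l₁ l₂) m x.val =
            if x.val = m + sz l₁ then (m, m + sz (node l₁ l₂))
            else if x.val < m + sz l₁ then rgOf l₁ m x.val
            else rgOf l₂ (m + sz l₁ + 1) x.val from rfl]
          rw [if_neg (by omega), if_pos (by omega)]
        rw [hrg1, hrg2] at hdesc
        have hsub := rgOf_sub l₁ m x.val (by omega) (by omega)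
        rw [SimpleGraph.pathGraph_adj] at hadj
        have hadj' : u.val + 1 = m + sz l₁ + sz l₂ + 1 ∨ m + sz l₁ + sz l₂ + 1 + 1 = u.val :=
          hadj
        omega
      · intro _
        rw [treeOf_parent_some hn']
        show stPar m (node l₁ (node l₂ r)) x.val = some (m + sz l₁)
        rw [(regA_x m l₁ l₂ r (by omega) (by omega)).2, hxv, par_rk l₁ m _ hl1']
    · -- x is the root of l₂ : moves to p
      have hl2' : l₂ ≠ nil := fun h => hl2 (by rw [h]; rfl)
      have hrkb := rk_mem l₂ (m + sz l₁ + 1) hl2'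
      have hexists : ∃ u ∈ (treeOf n m (node (node l₁ l₂) r) hn).descSet x,
          (SimpleGraph.pathGraph n).Adj u ⟨m + sz l₁ + sz l₂ + 1, hp⟩ := by
        refine ⟨⟨m + sz l₁ + sz l₂, by omega⟩, ?_, ?_⟩
        · rw [RTree.descSet, Set.mem_setOf_eq, treeOf_anc]
          show Relation.ReflTransGen (stepOf m (node (node l₁ l₂) r))
            (m + sz l₁ + sz l₂) x.val
          rw [hxv]
          apply anc_rk l₂ (m + sz l₁ + 1) (some (m + sz l₁)) _ ?_ (m + sz l₁ + sz l₂)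
            (by omega) (by omega)
          intro y w hy1 hy2 hpy
          show stPar m (node (node l₁ l₂) r) y = some w
          rw [(regA_y m l₁ l₂ r hy1 hy2).1]
          exact hpy
        · rw [SimpleGraph.pathGraph_adj]
          left
          show (m + sz l₁ + sz l₂) + 1 = m + sz l₁ + sz l₂ + 1
          omega
      constructor
      · intro _
        rw [treeOf_parent_some hn']
        show stPar m (node l₁ (node l₂ r)) x.val = some (m + sz l₁ + sz l₂ + 1)
        rw [(regA_y m l₁ l₂ r (by omega) (by omega)).2, hxv, par_rk l₂ (m + sz l₁ + 1) _ hl2']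
      · intro hno
        exact absurd hexists hno
  · -- all other vertices keep their parent
    intro x hxc hxp hnotchild
    have hxc' : x.val ≠ m + sz l₁ := fun h => hxc (Fin.ext h)
    have hxp' : x.val ≠ m + sz l₁ + sz l₂ + 1 := fun h => hxp (Fin.ext h)
    have hxval : x.val < n := x.isLt
    have hst : stPar m (node l₁ (node l₂ r)) x.val = stPar m (node (node l₁ l₂) r) x.val := by
      by_cases h1 : x.val + 1 < m
      · rw [stPar_spine _ h1, stPar_spine _ h1]
      · by_cases h2 : x.val + 1 = m
        · rw [stPar_top _ h2, stPar_top _ h2]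
        · have hxm : m ≤ x.val := by omega
          by_cases hxlt : x.val < m + sz l₁
          · rw [(regA_x m l₁ l₂ r hxm hxlt).1, (regA_x m l₁ l₂ r hxm hxlt).2]
          · by_cases hxlt2 : x.val < m + sz l₁ + sz l₂ + 1
            · have hy1 : m + sz l₁ + 1 ≤ x.val := by omega
              have hy2 : x.val < m + sz l₁ + 1 + sz l₂ := by omega
              rw [(regA_y m l₁ l₂ r hy1 hy2).1, (regA_y m l₁ l₂ r hy1 hy2).2]
              apply par_up_irrel
              intro hrk
              apply hnotchild
              rw [treeOf_parent_some hn]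
              show stPar m (node (node l₁ l₂) r) x.val = some (m + sz l₁)
              rw [(regA_y m l₁ l₂ r hy1 hy2).1, hrk]
              have hl2' : l₂ ≠ nil := sz_pos_ne_nil (by omega)
              rw [par_rk l₂ (m + sz l₁ + 1) _ hl2']
            · have hz : m + sz l₁ + sz l₂ + 2 ≤ x.val := by omega
              rw [(regA_z m l₁ l₂ r hz).1, (regA_z m l₁ l₂ r hz).2]
    show parF n m (node l₁ (node l₂ r)) x = parF n m (node (node l₁ l₂) r) x
    unfold parF
    rw [hst]
  · -- depth p ≤ 3
    apply depth_le_three_of _ _ ⟨m + sz l₁ + sz l₂ + 1, hp⟩ ⟨m - 1, by omega⟩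
      ⟨m + sz l₁ + sz l₂ + 1, hp⟩
    intro a ha
    rcases hanc_p a ha with h | h
    · left; exact Fin.ext h
    · right; left; exact Fin.ext h
  · -- depth c ≤ 3
    apply depth_le_three_of _ _ ⟨m + sz l₁, hc⟩ ⟨m + sz l₁ + sz l₂ + 1, hp⟩ ⟨m - 1, by omega⟩
    intro a ha
    rcases hanc_c a ha with h | h | h
    · left; exact Fin.ext h
    · right; left; exact Fin.ext h
    · right; right; exact Fin.ext h

end BstAux
namespace BstAux
open Sh

lemma regC_c (m : ℕ) (r : Sh) (hm : 1 ≤ m) :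
    stPar m (node nil r) m = some (m - 1) := by
  rw [stPar_ge _ (by omega), par_node, if_pos (by simp only [sz]; omega)]
  unfold rho
  rw [if_neg (by omega)]

lemma regC_z (m : ℕ) (r : Sh) {x : ℕ} (h1 : m + 1 ≤ x) :
    stPar m (node nil r) x = par r (m + 1) (some m) x ∧
    stPar (m + 1) r x = par r (m + 1) (some m) x := by
  constructor
  · rw [stPar_ge _ (by omega), par_node]
    rw [if_neg (by simp only [sz]; omega), if_neg (by simp only [sz]; omega)]
    have e1 : m + sz nil + 1 = m + 1 := rfl
    have e2 : m + sz nil = m := rfl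
    rw [e1, e2]
  · rw [stPar_ge _ (by omega)]
    unfold rho
    rw [if_neg (by omega)]
    have e : m + 1 - 1 = m := by omega
    rw [e]

lemma noopC (n : ℕ) (r : Sh) (hn : 0 + sz (node nil r) = n) (hn' : 1 + sz r = n) :
    treeOf n 0 (node nil r) hn = treeOf n 1 r hn' := by
  refine rtree_ext _ _ ?_ ?_
  · rfl
  funext v
  show parF n 0 (node nil r) v = parF n 1 r v
  unfold parF
  congr 1
  by_cases h0 : v.val = 0
  · rw [h0]
    rw [stPar_ge _ (by omega), par_node, if_pos (by rfl)]
    rw [stPar_top _ (by omega)]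
    unfold rho
    rw [if_pos rfl]
  · have h1 : 1 ≤ v.val := by omega
    have := regC_z 0 r (x := v.val) (by omega)
    rw [this.1, this.2]

theorem stepC (n m : ℕ) (r : Sh) (hm : 1 ≤ m)
    (hn : m + sz (node nil r) = n) (hn' : (m + 1) + sz r = n)
    (hpf : m - 1 < n) (hcf : m < n) :
    IsRotationAt (SimpleGraph.pathGraph n)
      (treeOf n m (node nil r) hn) (treeOf n (m + 1) r hn')
      ⟨m - 1, hpf⟩ ⟨m, hcf⟩ ∧
    (treeOf n m (node nil r) hn).depth ⟨m - 1, hpf⟩ ≤ 3 ∧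
    (treeOf n m (node nil r) hn).depth ⟨m, hcf⟩ ≤ 3 := by
  have hszR : sz (node nil r) = sz r + 1 := by simp only [sz]; omega
  refine ⟨⟨?_, rfl, ?_, ?_, ?_, ?_⟩, ?_, ?_⟩
  · exact (treeOf_parent_some hn).mpr (regC_c m r hm)
  · show parF n (m + 1) r ⟨m, hcf⟩ = parF n m (node nil r) ⟨m - 1, hpf⟩
    unfold parF
    rw [show ((⟨m, hcf⟩ : Fin n) : ℕ) = m from rfl,
      show ((⟨m - 1, hpf⟩ : Fin n) : ℕ) = m - 1 from rfl,
      stPar_top r (by omega), stPar_top _ (by omega)]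
  · rw [treeOf_parent_some hn']
    show stPar (m + 1) r (m - 1) = some m
    rw [stPar_spine _ (by omega)]
    congr 1
    omega
  · intro x hxp hpar
    rw [treeOf_parent_some hn] at hpar
    replace hpar : stPar m (node nil r) x.val = some m := hpar
    have hxval : x.val < n := x.isLt
    have hclass : r ≠ nil ∧ x.val = rk r (m + 1) := by
      by_cases h1 : x.val + 1 < m
      · rw [stPar_spine _ h1] at hpar
        have := Option.some.inj hpar; omega
      · by_cases h2 : x.val + 1 = m
        · rw [stPar_top _ h2] at hpar; cases hpar
        · by_cases h3 : x.val = m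
          · rw [h3, regC_c m r hm] at hpar
            have := Option.some.inj hpar; omega
          · have h4 : m + 1 ≤ x.val := by omega
            rw [(regC_z m r h4).1] at hpar
            have hout := par_some_out r (m + 1) _ _ _ h4 (by omega) hpar (by omega)
            exact ⟨sz_pos_ne_nil (by omega), hout.1⟩
    obtain ⟨hrnil, hxv⟩ := hclass
    have hrkb := rk_mem r (m + 1) hrnil
    constructor
    · rintro ⟨u, hu, hadj⟩
      exfalso
      rw [RTree.descSet, Set.mem_setOf_eq, treeOf_anc] at hu
      have hu' : Relation.ReflTransGen (stepOf m (node nil r)) u.val x.val := hu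
      have hdesc := desc_rg hu' (by omega) (by omega : x.val < m + sz (node nil r))
      have hrg : rgOf (node nil r) m x.val = rgOf r (m + 1) x.val := by
        rw [show rgOf (node nil r) m x.val =
          if x.val = m + sz nil then (m, m + sz (node nil r))
          else if x.val < m + sz nil then rgOf nil m x.val
          else rgOf r (m + sz nil + 1) x.val from rfl]
        rw [if_neg (by simp only [sz]; omega), if_neg (by simp only [sz]; omega)]
        have e : m + sz nil + 1 = m + 1 := rfl
        rw [e]
      rw [hrg] at hdesc
      have hsub := rgOf_sub r (m + 1) x.val (by omega) (by omega)
      rw [SimpleGraph.pathGraph_adj] at hadj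
      have hadj' : u.val + 1 = m - 1 ∨ (m - 1) + 1 = u.val := hadj
      omega
    · intro _
      rw [treeOf_parent_some hn']
      show stPar (m + 1) r x.val = some m
      rw [(regC_z m r (by omega)).2, hxv, par_rk r (m + 1) _ hrnil]
  · intro x hxc hxp hnotchild
    have hxc' : x.val ≠ m := fun h => hxc (Fin.ext h)
    have hxp' : x.val ≠ m - 1 := fun h => hxp (Fin.ext h)
    have hst : stPar (m + 1) r x.val = stPar m (node nil r) x.val := by
      by_cases h1 : x.val + 1 < m
      · rw [stPar_spine _ h1, stPar_spine (R := r) (by omega : x.val + 1 < m + 1)]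
      · by_cases h2 : x.val + 1 = m
        · omega
        · have h4 : m + 1 ≤ x.val := by omega
          rw [(regC_z m r h4).1, (regC_z m r h4).2]
    show parF n (m + 1) r x = parF n m (node nil r) x
    unfold parF
    rw [hst]
  · apply depth_le_three_of _ _ ⟨m - 1, hpf⟩ ⟨m - 1, hpf⟩ ⟨m - 1, hpf⟩
    intro a ha
    rw [treeOf_anc] at ha
    have ha' : Relation.ReflTransGen (stepOf m (node nil r)) (m - 1) a.val := ha
    rcases Relation.ReflTransGen.cases_head ha' with h | ⟨w, hw, _⟩
    · left; exact Fin.ext h.symm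
    · rw [show stepOf m (node nil r) (m - 1) w = (stPar m (node nil r) (m - 1) = some w)
        from rfl, stPar_top _ (by omega)] at hw
      cases hw
  · apply depth_le_three_of _ _ ⟨m, hcf⟩ ⟨m - 1, hpf⟩ ⟨m - 1, hpf⟩
    intro a ha
    rw [treeOf_anc] at ha
    have ha' : Relation.ReflTransGen (stepOf m (node nil r)) m a.val := ha
    rcases Relation.ReflTransGen.cases_head ha' with h | ⟨w, hw, hrest⟩
    · left; exact Fin.ext h.symm
    · right; left
      rw [show stepOf m (node nil r) m w = (stPar m (node nil r) m = some w) from rfl,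
        regC_c m r hm] at hw
      obtain rfl := Option.some.inj hw
      rcases Relation.ReflTransGen.cases_head hrest with h | ⟨w', hw', _⟩
      · exact Fin.ext h.symm
      · rw [show stepOf m (node nil r) (m - 1) w' = (stPar m (node nil r) (m - 1) = some w')
          from rfl, stPar_top _ (by omega)] at hw'
        cases hw'

end BstAux
namespace BstAux
open Sh

def consF {n : ℕ} (T₀ : RTree (Fin n)) (f : ℕ → RTree (Fin n)) : ℕ → RTree (Fin n)
  | 0 => T₀
  | j + 1 => f j

lemma main (n : ℕ) : ∀ (fuel m : ℕ) (R : Sh), 2 * sz R - rs R ≤ fuel →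
    ∀ (hn : m + sz R = n),
    ∃ (k : ℕ) (f : ℕ → RTree (Fin n)),
      k ≤ 2 * sz R - rs R ∧ f 0 = treeOf n m R hn ∧
      (∀ i < k, ∃ p c' : Fin n,
        IsRotationAt (SimpleGraph.pathGraph n) (f i) (f (i+1)) p c' ∧
        (f i).depth p ≤ 3 ∧ (f i).depth c' ≤ 3) ∧
      (∀ x : Fin n, m = 0 ∨ m - 1 ≤ x.val → ∃ i ≤ k, (f i).IsRoot x) := by
  intro fuel
  induction fuel with
  | zero =>
    intro m R hB hn
    cases R with
    | node l r =>
      exfalso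
      have h1 := rs_le_sz (node l r)
      have h2 : 0 < sz (node l r) := by simp only [sz]; omega
      omega
    | nil =>
      refine ⟨0, fun _ => treeOf n m nil hn, le_refl _, rfl, by omega, ?_⟩
      intro x hx
      have hxlt : x.val < n := x.isLt
      have hnm : n = m := by simp only [sz] at hn; omega
      refine ⟨0, le_refl _, ?_⟩
      rw [treeOf_isRoot]
      unfold rootN
      rcases hx with h | h
      · omega
      · rw [if_neg (by omega)]; omega
  | succ fuel ih =>
    intro m R hB hn
    cases R with
    | nil =>
      refine ⟨0, fun _ => treeOf n m nil hn, by omega, rfl, by omega, ?_⟩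
      intro x hx
      have hxlt : x.val < n := x.isLt
      have hnm : n = m := by simp only [sz] at hn; omega
      refine ⟨0, le_refl _, ?_⟩
      rw [treeOf_isRoot]
      unfold rootN
      rcases hx with h | h
      · omega
      · rw [if_neg (by omega)]; omega
    | node l₁r r =>
      cases l₁r with
      | nil =>
        -- C-step
        have hszR : sz (node nil r) = sz r + 1 := by simp only [sz]; omega
        have hrsR : rs (node nil r) = rs r + 1 := rfl
        have hrsr := rs_le_sz r
        by_cases hm : m = 0
        · subst hm
          have hn' : 1 + sz r = n := by omega
          obtain ⟨k, f, hk, hf0, hrot, hcov⟩ := ih 1 r (by omega) hn'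
          refine ⟨k, f, by omega, ?_, hrot, ?_⟩
          · rw [hf0, ← noopC n r hn hn']
          · intro x _
            exact hcov x (Or.inr (by omega))
        · have hm1 : 1 ≤ m := by omega
          have hn' : (m + 1) + sz r = n := by omega
          obtain ⟨k, f, hk, hf0, hrot, hcov⟩ := ih (m + 1) r (by omega) hn'
          have hpf : m - 1 < n := by omega
          have hcf : m < n := by omega
          obtain ⟨hrotC, hd1, hd2⟩ := stepC n m r hm1 hn hn' hpf hcf
          refine ⟨k + 1, consF (treeOf n m (node nil r) hn) f, by omega, rfl, ?_, ?_⟩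
          · intro i hi
            cases i with
            | zero =>
              refine ⟨⟨m - 1, hpf⟩, ⟨m, hcf⟩, ?_, hd1, hd2⟩
              show IsRotationAt _ (treeOf n m (node nil r) hn) (f 0) _ _
              rw [hf0]
              exact hrotC
            | succ j =>
              exact hrot j (by omega)
          · intro x hx
            have hx' : m - 1 ≤ x.val := by rcases hx with h | h; omega; exact h
            by_cases hxm : x.val = m - 1
            · refine ⟨0, by omega, ?_⟩
              show (treeOf n m (node nil r) hn).IsRoot x
              rw [treeOf_isRoot]
              unfold rootN
              rw [if_neg (by omega)]
              exact hxm
            · obtain ⟨i, hik, hroot⟩ := hcov x (Or.inr (by omega))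
              exact ⟨i + 1, by omega, hroot⟩
      | node l₁ l₂ =>
        -- A-step
        have hszR : sz (node (node l₁ l₂) r) = sz l₁ + sz l₂ + sz r + 2 := by
          simp only [sz]; omega
        have hszR' : sz (node l₁ (node l₂ r)) = sz l₁ + sz l₂ + sz r + 2 := by
          simp only [sz]; omega
        have hrsR : rs (node (node l₁ l₂) r) = rs r + 1 := rfl
        have hrsR' : rs (node l₁ (node l₂ r)) = rs r + 2 := rfl
        have hrsr := rs_le_sz r
        have hn' : m + sz (node l₁ (node l₂ r)) = n := by omega
        obtain ⟨k, f, hk, hf0, hrot, hcov⟩ := ih m (node l₁ (node l₂ r)) (by omega) hn'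
        have hp : m + sz l₁ + sz l₂ + 1 < n := by omega
        have hc : m + sz l₁ < n := by omega
        obtain ⟨hrotA, hd1, hd2⟩ := stepA n m l₁ l₂ r hn hn' hp hc
        refine ⟨k + 1, consF (treeOf n m (node (node l₁ l₂) r) hn) f, by omega, rfl, ?_, ?_⟩
        · intro i hi
          cases i with
          | zero =>
            refine ⟨⟨m + sz l₁ + sz l₂ + 1, hp⟩, ⟨m + sz l₁, hc⟩, ?_, hd1, hd2⟩
            show IsRotationAt _ (treeOf n m (node (node l₁ l₂) r) hn) (f 0) _ _
            rw [hf0]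
            exact hrotA
          | succ j =>
            exact hrot j (by omega)
        · intro x hx
          obtain ⟨i, hik, hroot⟩ := hcov x hx
          exact ⟨i + 1, by omega, hroot⟩

end BstAux
namespace BstAux

section Generic
variable {V : Type} (T : RTree V)

lemma rtg_det {x y z : V} (h1 : T.parent x = some y) (h2 : T.parent x = some z) : y = z := by
  rw [h1] at h2; exact Option.some.inj h2

/-- two ancestors of the same vertex are comparable -/
lemma rtg_conn {x y z : V}
    (h1 : Relation.ReflTransGen (fun a b => T.parent a = some b) x y)
    (h2 : Relation.ReflTransGen (fun a b => T.parent a = some b) x z) :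
    Relation.ReflTransGen (fun a b => T.parent a = some b) y z ∨
    Relation.ReflTransGen (fun a b => T.parent a = some b) z y := by
  induction h1 using Relation.ReflTransGen.head_induction_on generalizing z with
  | refl => left; exact h2
  | head hstep hrest ih =>
    rename_i p q
    rcases Relation.ReflTransGen.cases_head h2 with rfl | ⟨c, hc, hcz⟩
    · right
      exact Relation.ReflTransGen.head hstep hrest
    · obtain rfl : q = c := rtg_det T hstep hc
      exact ih hcz

lemma loop_reach {x y : V} (hl : T.parent x = some x)
    (h : Relation.ReflTransGen (fun a b => T.parent a = some b) x y) : y = x := by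
  induction h with
  | refl => rfl
  | tail _ hstep ih =>
    subst ih
    exact rtg_det T hstep hl

lemma loop_false {x : V} (hl : T.parent x = some x) (hx : x ∈ T.supp) : False := by
  obtain ⟨r, _, hrnone, hxr⟩ := T.reaches_root x hx
  have : r = x := loop_reach T hl hxr
  subst this
  rw [hrnone] at hl
  cases hl

lemma reach_antisym {r : V} (hrnone : T.parent r = none) :
    ∀ {x}, Relation.ReflTransGen (fun a b => T.parent a = some b) x r →
    ∀ y, Relation.ReflTransGen (fun a b => T.parent a = some b) x y →
      Relation.ReflTransGen (fun a b => T.parent a = some b) y x → x = y := by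
  intro x hxr
  induction hxr using Relation.ReflTransGen.head_induction_on with
  | refl =>
    intro y h1 _
    rcases Relation.ReflTransGen.cases_head h1 with rfl | ⟨c, hc, _⟩
    · rfl
    · rw [hrnone] at hc; cases hc
  | head hstep hrest ih =>
    rename_i p q
    intro y h1 h2
    rcases Relation.ReflTransGen.cases_head h1 with rfl | ⟨c, hc, hcy⟩
    · rfl
    · have hcq : c = q := (rtg_det T hstep hc).symm
      rw [hcq] at hcy
      have hyq : Relation.ReflTransGen (fun a b => T.parent a = some b) y q :=
        h2.trans (Relation.ReflTransGen.head hstep Relation.ReflTransGen.refl)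
      have hqy : q = y := ih y hcy hyq
      rw [← hqy] at h2
      have hqp : q = p := ih p h2 (Relation.ReflTransGen.head hstep Relation.ReflTransGen.refl)
      exact hqp.symm.trans hqy

lemma anc_antisymm {a b : V} (ha : a ∈ T.supp) (h1 : T.Anc a b) (h2 : T.Anc b a) : a = b := by
  obtain ⟨r, _, hrnone, har⟩ := T.reaches_root a ha
  exact reach_antisym T hrnone har b h2 h1

lemma anc_trans {a b c : V} (h1 : T.Anc a b) (h2 : T.Anc b c) : T.Anc a c :=
  Relation.ReflTransGen.trans h2 h1

lemma anc_step {a b : V} (h : T.parent a = some b) : T.Anc b a :=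
  Relation.ReflTransGen.head h Relation.ReflTransGen.refl

lemma anc_of_parent_anc {a b c : V} (hp : T.parent a = some b) (h : T.Anc c b) : T.Anc c a :=
  Relation.ReflTransGen.head hp h

end Generic
end BstAux
namespace BstAux
open Sh

section Extract
variable {n : ℕ} (T : RTree (Fin n))

lemma walk_interval {s : Set (Fin n)} :
    ∀ {u bv : ↑s}
      (_ : ((restrictG (SimpleGraph.pathGraph n) ↑(Finset.univ : Finset (Fin n))).induce s).Walk
        u bv) (x : Fin n),
      (((u : Fin n)).val ≤ x.val ∧ x.val ≤ ((bv : Fin n)).val) ∨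
      (((bv : Fin n)).val ≤ x.val ∧ x.val ≤ ((u : Fin n)).val) → x ∈ s := by
  intro u bv w
  induction w with
  | nil =>
    rename_i a
    intro x hx
    have : x = ↑a := Fin.ext (by omega)
    rw [this]
    exact a.2
  | cons h p ih =>
    rename_i a b c
    intro x hx
    by_cases hxa : x = ↑a
    · rw [hxa]; exact a.2
    · have hxa' : x.val ≠ (↑a : Fin n).val := fun hh => hxa (Fin.ext hh)
      have hadj : (SimpleGraph.pathGraph n).Adj ↑a ↑b :=
        (show (restrictG (SimpleGraph.pathGraph n) _).Adj (a : Fin n) (b : Fin n) from h).1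
      rw [SimpleGraph.pathGraph_adj] at hadj
      exact ih x (by omega)

lemma desc_icc (hT : IsSTG (SimpleGraph.pathGraph n) T) (v : Fin n) :
    ∃ a b : ℕ, a ≤ v.val ∧ v.val ≤ b ∧ b < n ∧
      T.descSet v = {x : Fin n | a ≤ x.val ∧ x.val ≤ b} := by
  obtain ⟨hsupp, hconn, hcomp⟩ := hT
  have hfin := Set.toFinite (T.descSet v)
  have hvmem : v ∈ T.descSet v := Relation.ReflTransGen.refl
  have hne : hfin.toFinset.Nonempty := ⟨v, hfin.mem_toFinset.mpr hvmem⟩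
  set A := hfin.toFinset.min' hne with hA
  set B := hfin.toFinset.max' hne with hB
  have hAmem : A ∈ T.descSet v := hfin.mem_toFinset.mp (hfin.toFinset.min'_mem hne)
  have hBmem : B ∈ T.descSet v := hfin.mem_toFinset.mp (hfin.toFinset.max'_mem hne)
  refine ⟨A.val, B.val, ?_, ?_, B.isLt, ?_⟩
  · exact hfin.toFinset.min'_le v (hfin.mem_toFinset.mpr hvmem)
  · exact hfin.toFinset.le_max' v (hfin.mem_toFinset.mpr hvmem)
  · ext x
    simp only [Set.mem_setOf_eq]
    constructor
    · intro hx
      exact ⟨hfin.toFinset.min'_le x (hfin.mem_toFinset.mpr hx),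
        hfin.toFinset.le_max' x (hfin.mem_toFinset.mpr hx)⟩
    · intro hx
      have hreach := ((hconn v (Finset.mem_univ v)).preconnected) ⟨A, hAmem⟩ ⟨B, hBmem⟩
      obtain ⟨w⟩ := hreach
      exact walk_interval w x (Or.inl hx)

lemma mem_supp_univ (hT : IsSTG (SimpleGraph.pathGraph n) T) (x : Fin n) : x ∈ T.supp := by
  rw [hT.1]; exact Finset.mem_univ x


lemma child_left (hT : IsSTG (SimpleGraph.pathGraph n) T) (v : Fin n) (a b : ℕ)
    (hdesc : T.descSet v = {x : Fin n | a ≤ x.val ∧ x.val ≤ b})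
    (hb : b < n) (hav : a < v.val) (hvb : v.val ≤ b) :
    ∃ cl : Fin n, T.parent cl = some v ∧
      T.descSet cl = {x : Fin n | a ≤ x.val ∧ x.val ≤ v.val - 1} := by
  have hdescP : ∀ x : Fin n, T.Anc v x ↔ (a ≤ x.val ∧ x.val ≤ b) := fun x =>
    Set.ext_iff.mp hdesc x
  have hcomp := hT.2.2
  have hun : v.val - 1 < n := by omega
  have hu_anc : T.Anc v ⟨v.val - 1, hun⟩ :=
    (hdescP _).mpr ⟨(by omega : a ≤ v.val - 1), (by omega : v.val - 1 ≤ b)⟩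
  rcases Relation.ReflTransGen.cases_tail hu_anc with heq | ⟨cl, hucl, hclv⟩
  · exfalso
    have h2 : v.val = v.val - 1 := congrArg Fin.val heq
    omega
  · have hclmem : cl ∈ T.supp := mem_supp_univ T hT cl
    have hv_notmem : ¬ T.Anc cl v := by
      intro hvm
      have hclv' : T.Anc v cl := anc_step T hclv
      have : cl = v := anc_antisymm T hclmem hvm hclv'
      subst this
      exact loop_false T hclv hclmem
    have hsub : ∀ x : Fin n, T.Anc cl x → T.Anc v x := fun x hx =>
      Relation.ReflTransGen.tail hx hclv
    obtain ⟨a', b', ha'c, hcb', hb'n, hdesc'⟩ := desc_icc T hT cl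
    have hdescP' : ∀ x : Fin n, T.Anc cl x ↔ (a' ≤ x.val ∧ x.val ≤ b') := fun x =>
      Set.ext_iff.mp hdesc' x
    have hub : a' ≤ v.val - 1 ∧ v.val - 1 ≤ b' := by
      have h := (hdescP' _).mp hucl
      exact ⟨h.1, h.2⟩
    have ha'n : a' < n := by omega
    have ha'a : a ≤ a' := by
      have h := (hdescP ⟨a', ha'n⟩).mp (hsub _ ((hdescP' ⟨a', ha'n⟩).mpr
        ⟨(le_refl a' : a' ≤ a'), (by omega : a' ≤ b')⟩))
      exact h.1
    have hb'b : b' ≤ b := by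
      have h := (hdescP ⟨b', hb'n⟩).mp (hsub _ ((hdescP' ⟨b', hb'n⟩).mpr
        ⟨(by omega : a' ≤ b'), (le_refl b' : b' ≤ b')⟩))
      exact h.2
    have hb'v : b' < v.val := by
      by_contra hcon
      exact hv_notmem ((hdescP' v).mpr ⟨(by omega : a' ≤ v.val), (by omega : v.val ≤ b')⟩)
    have hb'eq : b' = v.val - 1 := by omega
    have ha'eq : a' = a := by
      by_contra hne
      have hlt : a < a' := by omega
      have hu1n : a' - 1 < n := by omega
      have hu1v : T.Anc v ⟨a' - 1, hu1n⟩ :=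
        (hdescP _).mpr ⟨(by omega : a ≤ a' - 1), (by omega : a' - 1 ≤ b)⟩
      have hu1ncl : ¬ T.Anc cl ⟨a' - 1, hu1n⟩ := by
        intro hh
        have h := (hdescP' _).mp hh
        have h1 : a' ≤ a' - 1 := h.1
        omega
      have hu2cl : T.Anc cl ⟨a', ha'n⟩ :=
        (hdescP' _).mpr ⟨(le_refl a' : a' ≤ a'), (by omega : a' ≤ b')⟩
      have hAdj : (SimpleGraph.pathGraph n).Adj ⟨a' - 1, hu1n⟩ ⟨a', ha'n⟩ := by
        rw [SimpleGraph.pathGraph_adj]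
        exact Or.inl (by omega : (a' - 1) + 1 = a')
      rcases hcomp _ _ (Finset.mem_univ _) (Finset.mem_univ _) hAdj with hanc | hanc
      · rcases rtg_conn T hu2cl hanc with h1 | h1
        · rcases Relation.ReflTransGen.cases_head h1 with heq2 | ⟨c2, hc2, hrest2⟩
          · apply hu1ncl
            rw [← heq2]
            exact Relation.ReflTransGen.refl
          · have hc2v : c2 = v := rtg_det T hc2 hclv
            rw [hc2v] at hrest2
            have heqv : (⟨a' - 1, hu1n⟩ : Fin n) = v :=
              anc_antisymm T (mem_supp_univ T hT _) hrest2 hu1v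
            have : a' - 1 = v.val := congrArg Fin.val heqv
            omega
        · exact hu1ncl h1
      · exact hu1ncl (anc_trans T hu2cl hanc)
    refine ⟨cl, hclv, ?_⟩
    rw [hdesc', ha'eq, hb'eq]

lemma child_right (hT : IsSTG (SimpleGraph.pathGraph n) T) (v : Fin n) (a b : ℕ)
    (hdesc : T.descSet v = {x : Fin n | a ≤ x.val ∧ x.val ≤ b})
    (hb : b < n) (hav : a ≤ v.val) (hvb : v.val < b) :
    ∃ cr : Fin n, T.parent cr = some v ∧
      T.descSet cr = {x : Fin n | v.val + 1 ≤ x.val ∧ x.val ≤ b} := by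
  have hdescP : ∀ x : Fin n, T.Anc v x ↔ (a ≤ x.val ∧ x.val ≤ b) := fun x =>
    Set.ext_iff.mp hdesc x
  have hcomp := hT.2.2
  have hun : v.val + 1 < n := by omega
  have hu_anc : T.Anc v ⟨v.val + 1, hun⟩ :=
    (hdescP _).mpr ⟨(by omega : a ≤ v.val + 1), (by omega : v.val + 1 ≤ b)⟩
  rcases Relation.ReflTransGen.cases_tail hu_anc with heq | ⟨cr, hucr, hcrv⟩
  · exfalso
    have h2 : v.val = v.val + 1 := congrArg Fin.val heq
    omega
  · have hcrmem : cr ∈ T.supp := mem_supp_univ T hT cr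
    have hv_notmem : ¬ T.Anc cr v := by
      intro hvm
      have hcrv' : T.Anc v cr := anc_step T hcrv
      have : cr = v := anc_antisymm T hcrmem hvm hcrv'
      subst this
      exact loop_false T hcrv hcrmem
    have hsub : ∀ x : Fin n, T.Anc cr x → T.Anc v x := fun x hx =>
      Relation.ReflTransGen.tail hx hcrv
    obtain ⟨a', b', ha'c, hcb', hb'n, hdesc'⟩ := desc_icc T hT cr
    have hdescP' : ∀ x : Fin n, T.Anc cr x ↔ (a' ≤ x.val ∧ x.val ≤ b') := fun x =>
      Set.ext_iff.mp hdesc' x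
    have hub : a' ≤ v.val + 1 ∧ v.val + 1 ≤ b' := by
      have h := (hdescP' _).mp hucr
      exact ⟨h.1, h.2⟩
    have ha'n : a' < n := by omega
    have ha'a : a ≤ a' := by
      have h := (hdescP ⟨a', ha'n⟩).mp (hsub _ ((hdescP' ⟨a', ha'n⟩).mpr
        ⟨(le_refl a' : a' ≤ a'), (by omega : a' ≤ b')⟩))
      exact h.1
    have hb'b : b' ≤ b := by
      have h := (hdescP ⟨b', hb'n⟩).mp (hsub _ ((hdescP' ⟨b', hb'n⟩).mpr
        ⟨(by omega : a' ≤ b'), (le_refl b' : b' ≤ b')⟩))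
      exact h.2
    have ha'v : v.val < a' := by
      by_contra hcon
      exact hv_notmem ((hdescP' v).mpr ⟨(by omega : a' ≤ v.val), (by omega : v.val ≤ b')⟩)
    have ha'eq : a' = v.val + 1 := by omega
    have hb'eq : b' = b := by
      by_contra hne
      have hlt : b' < b := by omega
      have hu1n : b' + 1 < n := by omega
      have hu1v : T.Anc v ⟨b' + 1, hu1n⟩ :=
        (hdescP _).mpr ⟨(by omega : a ≤ b' + 1), (by omega : b' + 1 ≤ b)⟩
      have hu1ncl : ¬ T.Anc cr ⟨b' + 1, hu1n⟩ := by
        intro hh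
        have h := (hdescP' _).mp hh
        have h1 : b' + 1 ≤ b' := h.2
        omega
      have hu2cl : T.Anc cr ⟨b', hb'n⟩ :=
        (hdescP' _).mpr ⟨(by omega : a' ≤ b'), (le_refl b' : b' ≤ b')⟩
      have hAdj : (SimpleGraph.pathGraph n).Adj ⟨b' + 1, hu1n⟩ ⟨b', hb'n⟩ := by
        rw [SimpleGraph.pathGraph_adj]
        exact Or.inr (by omega : b' + 1 = b' + 1)
      rcases hcomp _ _ (Finset.mem_univ _) (Finset.mem_univ _) hAdj with hanc | hanc
      · rcases rtg_conn T hu2cl hanc with h1 | h1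
        · rcases Relation.ReflTransGen.cases_head h1 with heq2 | ⟨c2, hc2, hrest2⟩
          · apply hu1ncl
            rw [← heq2]
            exact Relation.ReflTransGen.refl
          · have hc2v : c2 = v := rtg_det T hc2 hcrv
            rw [hc2v] at hrest2
            have heqv : (⟨b' + 1, hu1n⟩ : Fin n) = v :=
              anc_antisymm T (mem_supp_univ T hT _) hrest2 hu1v
            have : b' + 1 = v.val := congrArg Fin.val heqv
            omega
        · exact hu1ncl h1
      · exact hu1ncl (anc_trans T hu2cl hanc)
    refine ⟨cr, hcrv, ?_⟩
    rw [hdesc', ha'eq, hb'eq]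

end Extract
end BstAux
namespace BstAux
open Sh

section Build
variable {n : ℕ} (T : RTree (Fin n))

lemma build (hT : IsSTG (SimpleGraph.pathGraph n) T) :
    ∀ (s : ℕ) (v : Fin n) (a b : ℕ), b + 1 - a = s → a ≤ v.val → v.val ≤ b → b < n →
    T.descSet v = {x : Fin n | a ≤ x.val ∧ x.val ≤ b} →
    ∃ sh : Sh, sz sh = s ∧ a + sz sh = b + 1 ∧
      (∀ x : Fin n, a ≤ x.val → x.val ≤ b →
        Option.map Fin.val (T.parent x) =
          par sh a (Option.map Fin.val (T.parent v)) x.val) ∧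
      a + (match sh with | Sh.nil => 0 | Sh.node l _ => sz l) = v.val := by
  intro s
  induction s using Nat.strong_induction_on with
  | _ s ih =>
    intro v a b hs hav hvb hbn hdesc
    obtain ⟨L, hszL, hagrL⟩ : ∃ L : Sh, sz L = v.val - a ∧
        ∀ x : Fin n, a ≤ x.val → x.val + 1 ≤ v.val →
          Option.map Fin.val (T.parent x) = par L a (some v.val) x.val := by
      by_cases hva : v.val = a
      · refine ⟨Sh.nil, by simp only [sz]; omega, ?_⟩
        intro x hx1 hx2
        exact absurd hx2 (by omega)
      · have hav' : a < v.val := by omega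
        obtain ⟨cl, hclv, hdesc_cl⟩ := child_left T hT v a b hdesc hbn hav' hvb
        have hclself : T.Anc cl cl := Relation.ReflTransGen.refl
        have hclb := (Set.ext_iff.mp hdesc_cl cl).mp hclself
        obtain ⟨L, hszL, -, hagr, -⟩ := ih (v.val - 1 + 1 - a) (by omega) cl a (v.val - 1)
          rfl hclb.1 hclb.2 (by omega) hdesc_cl
        refine ⟨L, by omega, ?_⟩
        intro x hx1 hx2
        have hh := hagr x hx1 (by omega)
        rw [hclv] at hh
        rw [show Option.map Fin.val (some v) = some v.val from rfl] at hh
        exact hh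
    obtain ⟨Rr, hszRr, hagrR⟩ : ∃ Rr : Sh, sz Rr = b - v.val ∧
        ∀ x : Fin n, v.val + 1 ≤ x.val → x.val ≤ b →
          Option.map Fin.val (T.parent x) = par Rr (v.val + 1) (some v.val) x.val := by
      by_cases hvb' : v.val = b
      · refine ⟨Sh.nil, by simp only [sz]; omega, ?_⟩
        intro x hx1 hx2
        exact absurd hx2 (by omega)
      · have hvb'' : v.val < b := by omega
        obtain ⟨cr, hcrv, hdesc_cr⟩ := child_right T hT v a b hdesc hbn hav hvb''
        have hcrself : T.Anc cr cr := Relation.ReflTransGen.refl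
        have hcrb := (Set.ext_iff.mp hdesc_cr cr).mp hcrself
        obtain ⟨Rr, hszRr, -, hagr, -⟩ := ih (b + 1 - (v.val + 1)) (by omega) cr (v.val + 1) b
          rfl hcrb.1 hcrb.2 (by omega) hdesc_cr
        refine ⟨Rr, by omega, ?_⟩
        intro x hx1 hx2
        have hh := hagr x hx1 hx2
        rw [hcrv] at hh
        rw [show Option.map Fin.val (some v) = some v.val from rfl] at hh
        exact hh
    have hk : a + sz L = v.val := by omega
    refine ⟨Sh.node L Rr, by simp only [sz]; omega, by simp only [sz]; omega, ?_, ?_⟩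
    · intro x hx1 hx2
      rw [par_node]
      by_cases hxv : x.val = a + sz L
      · rw [if_pos hxv]
        have hxveq : x = v := Fin.ext (by omega)
        rw [hxveq]
      · rw [if_neg hxv]
        by_cases hxlt : x.val < a + sz L
        · rw [if_pos hxlt, hk]
          exact hagrL x hx1 (by omega)
        · rw [if_neg hxlt, hk]
          exact hagrR x (by omega) hx2
    · show a + sz L = v.val
      exact hk

lemma exists_shape (hT : IsSTG (SimpleGraph.pathGraph n) T) (hn : 1 ≤ n) :
    ∃ (R₀ : Sh) (hsz : 0 + sz R₀ = n), T = treeOf n 0 R₀ hsz := by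
  obtain ⟨r, hrmem, hrnone, -⟩ := T.reaches_root ⟨0, hn⟩ (mem_supp_univ T hT _)
  have hdesc : T.descSet r = {x : Fin n | 0 ≤ x.val ∧ x.val ≤ n - 1} := by
    ext x
    simp only [Set.mem_setOf_eq]
    constructor
    · intro _
      exact ⟨Nat.zero_le _, by omega⟩
    · intro _
      obtain ⟨r', hr'mem, hr'none, hxr'⟩ := T.reaches_root x (mem_supp_univ T hT x)
      have hrr : r' = r := T.root_unique r' hr'mem r hrmem hr'none hrnone
      rw [← hrr]
      exact hxr'
  obtain ⟨sh, hsz, -, hagr, -⟩ := build T hT n r 0 (n - 1) (by omega) (Nat.zero_le _)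
    (by omega) (by omega) hdesc
  refine ⟨sh, by omega, ?_⟩
  apply rtree_ext
  · rw [hT.1]; rfl
  · funext x
    have hx := hagr x (Nat.zero_le _) (by omega)
    rw [hrnone] at hx
    rw [show Option.map Fin.val (none : Option (Fin n)) = none from rfl] at hx
    show T.parent x = parF n 0 sh x
    unfold parF
    rw [stPar_ge sh (Nat.zero_le _)]
    rw [show rho 0 = none from rfl]
    cases hpx : T.parent x with
    | none =>
      rw [hpx] at hx
      rw [show Option.map Fin.val (none : Option (Fin n)) = none from rfl] at hx
      rw [← hx]
      rfl
    | some w =>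
      rw [hpx] at hx
      rw [show Option.map Fin.val (some w) = some w.val from rfl] at hx
      rw [← hx]
      show some w = if h : w.val < n then some ⟨w.val, h⟩ else none
      rw [dif_pos w.isLt]

end Build
end BstAux
/-- every BST admits a sequence of `O(n)` rotations, each involving only
nodes of depth at most 3, during which every node becomes the root at some point. -/
theorem bst_rotation_all_roots :
    ∃ c : ℝ, 0 < c ∧
      ∀ (n : ℕ) (T : RTree (Fin n)), IsSTG (SimpleGraph.pathGraph n) T →
        ∃ (k : ℕ) (f : ℕ → RTree (Fin n)),
          (k : ℝ) ≤ c * n ∧ f 0 = T ∧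
          (∀ i < k, ∃ p c' : Fin n,
            IsRotationAt (SimpleGraph.pathGraph n) (f i) (f (i+1)) p c' ∧
            (f i).depth p ≤ 3 ∧ (f i).depth c' ≤ 3) ∧
          (∀ x : Fin n, ∃ i ≤ k, (f i).IsRoot x) := by
  refine ⟨2, by norm_num, ?_⟩
  intro n T hT
  by_cases hn0 : n = 0
  · subst hn0
    exact ⟨0, fun _ => T, by norm_num, rfl, fun i hi => absurd hi (by omega),
      fun x => x.elim0⟩
  · have hn1 : 1 ≤ n := by omega
    obtain ⟨R₀, hsz, hTeq⟩ := BstAux.exists_shape T hT hn1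
    have hB : 2 * BstAux.Sh.sz R₀ - BstAux.Sh.rs R₀ ≤ 2 * n := by
      have := BstAux.Sh.rs_le_sz R₀
      omega
    obtain ⟨k, f, hk, hf0, hrot, hcov⟩ := BstAux.main n (2 * n) 0 R₀ hB hsz
    refine ⟨k, f, ?_, ?_, hrot, ?_⟩
    · have hkn : k ≤ 2 * n := by
        have := BstAux.Sh.rs_le_sz R₀
        omega
      exact_mod_cast hkn
    · rw [hf0, ← hTeq]
    · intro x
      exact hcov x (Or.inl rfl)
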